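/- Pointwise power equivalence: Let γ > 1. There exist constants 0 < c ≤ C, depending only on γ, such that for all real a, b ≥ 0: c (a^{γ/2} − b^{γ/2})² ≤ (a^{γ−1} − b^{γ−1})(a − b) ≤ C (a^{γ/2} − b^{γ/2})². -/

import Mathlib

noncomputable section

/-- Two-sided bound on `1 - t^r` for `t ∈ [0,1]`, `r > 0`. -/
lemma pow_diff_bounds {r t : ℝ} (hr : 0 < r) (h0 : 0 ≤ t) (h1 : t ≤ 1) :
    min 1 r * (1 - t) ≤ 1 - t ^ r ∧ 1 - t ^ r ≤ max 1 r * (1 - t) := by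
  have hup : ∀ s : ℝ, 1 ≤ s → t ^ s ≤ t := by
    intro s hs
    rcases eq_or_lt_of_le h0 with rfl | ht
    · rw [Real.zero_rpow (by linarith : s ≠ 0)]
    · calc t ^ s ≤ t ^ (1:ℝ) := Real.rpow_le_rpow_of_exponent_ge ht h1 hs
        _ = t := Real.rpow_one t
  have hdn : ∀ s : ℝ, 0 < s → s ≤ 1 → t ≤ t ^ s := by
    intro s hs hs1
    rcases eq_or_lt_of_le h0 with rfl | ht
    · rw [Real.zero_rpow hs.ne']
    · calc t = t ^ (1:ℝ) := (Real.rpow_one t).symm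
        _ ≤ t ^ s := Real.rpow_le_rpow_of_exponent_ge ht h1 hs1
  rcases le_total r 1 with hr1 | hr1
  · rw [min_eq_right hr1, max_eq_left hr1]
    constructor
    · -- Bernoulli: t^r ≤ 1 + r * (t - 1)
      have := rpow_one_add_le_one_add_mul_self (s := t - 1) (by linarith) hr.le hr1
      have h' : t ^ r ≤ 1 + r * (t - 1) := by
        rwa [show (1 : ℝ) + (t - 1) = t by ring] at this
      nlinarith
    · have := hdn r hr hr1; nlinarith
  · rw [min_eq_left hr1, max_eq_right hr1]
    constructor
    · have := hup r hr1; nlinarith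
    · have := one_add_mul_self_le_rpow_one_add (s := t - 1) (by linarith) hr1
      have h' : 1 + r * (t - 1) ≤ t ^ r := by
        rwa [show (1 : ℝ) + (t - 1) = t by ring] at this
      nlinarith

/-- Key one-sided version: both inequalities for `0 ≤ b ≤ a`. -/
lemma key_ordered (γ : ℝ) (hγ : 1 < γ) (a b : ℝ) (hb : 0 ≤ b) (hba : b ≤ a) :
    (min 1 (γ - 1) / (max 1 (γ/2))^2) * (a ^ (γ/2) - b ^ (γ/2)) ^ 2
        ≤ (a ^ (γ - 1) - b ^ (γ - 1)) * (a - b) ∧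
    (a ^ (γ - 1) - b ^ (γ - 1)) * (a - b)
        ≤ (max 1 (γ - 1) / (min 1 (γ/2))^2) * (a ^ (γ/2) - b ^ (γ/2)) ^ 2 := by
  have ha : 0 ≤ a := hb.trans hba
  have hγ1 : (0:ℝ) < γ - 1 := by linarith
  have hγ2 : (0:ℝ) < γ/2 := by linarith
  rcases eq_or_lt_of_le ha with rfl | ha'
  · have hb0 : b = 0 := le_antisymm hba hb
    subst hb0
    simp [Real.zero_rpow hγ1.ne', Real.zero_rpow hγ2.ne']
  -- set t = b / a
  set t : ℝ := b / a with ht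
  have ht0 : 0 ≤ t := div_nonneg hb ha
  have ht1 : t ≤ 1 := (div_le_one ha').mpr hba
  have hbt : b = a * t := by rw [ht, mul_div_assoc']; exact (mul_div_cancel_left₀ b ha'.ne').symm
  have hrw : ∀ s : ℝ, 0 < s → a ^ s - b ^ s = a ^ s * (1 - t ^ s) := by
    intro s hs
    rw [hbt, Real.mul_rpow ha ht0]; ring
  have e1 := hrw (γ - 1) hγ1
  have e2 := hrw (γ/2) hγ2
  have e3 : a - b = a * (1 - t) := by rw [hbt]; ring
  have ha1 : a ^ (γ - 1) * a = a ^ γ := by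
    have h := Real.rpow_add ha' (γ - 1) 1
    rw [Real.rpow_one] at h
    rw [← h]; norm_num
  have ha2 : (a ^ (γ/2)) ^ 2 = a ^ γ := by
    rw [← Real.rpow_natCast (a ^ (γ/2)) 2, ← Real.rpow_mul ha]; norm_num
  have haγ : 0 ≤ a ^ γ := Real.rpow_nonneg ha γ
  obtain ⟨l1, u1⟩ := pow_diff_bounds hγ1 ht0 ht1
  obtain ⟨l2, u2⟩ := pow_diff_bounds hγ2 ht0 ht1
  have hm1 : 0 < min 1 (γ - 1) := lt_min one_pos hγ1
  have hM1 : 0 < max 1 (γ - 1) := lt_of_lt_of_le one_pos (le_max_left _ _)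
  have hm2 : 0 < min 1 (γ/2) := lt_min one_pos hγ2
  have hM2 : 0 < max 1 (γ/2) := lt_of_lt_of_le one_pos (le_max_left _ _)
  have h1t : 0 ≤ 1 - t := by linarith
  have hsq : 0 ≤ 1 - t ^ (γ/2) := le_trans (by positivity) l2
  set S := 1 - t ^ (γ/2)
  set T := 1 - t ^ (γ - 1)
  set U := 1 - t
  have hcore1 : (min 1 (γ - 1) / (max 1 (γ/2))^2) * S ^ 2 ≤ T * U := by
    rw [div_mul_eq_mul_div, div_le_iff₀ (by positivity)]
    calc min 1 (γ - 1) * S ^ 2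
        ≤ min 1 (γ - 1) * (max 1 (γ/2) * U) ^ 2 := by
          exact mul_le_mul_of_nonneg_left (pow_le_pow_left₀ hsq u2 2) hm1.le
      _ = min 1 (γ - 1) * U * (U * (max 1 (γ/2))^2) := by ring
      _ ≤ T * (U * (max 1 (γ/2))^2) := mul_le_mul_of_nonneg_right l1 (by positivity)
      _ = T * U * (max 1 (γ/2))^2 := by ring
  have hcore2 : T * U ≤ (max 1 (γ - 1) / (min 1 (γ/2))^2) * S ^ 2 := by
    rw [div_mul_eq_mul_div, le_div_iff₀ (by positivity)]
    calc T * U * (min 1 (γ/2))^2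
        ≤ max 1 (γ - 1) * U * U * (min 1 (γ/2))^2 := by
          exact mul_le_mul_of_nonneg_right (mul_le_mul_of_nonneg_right u1 h1t) (by positivity)
      _ = max 1 (γ - 1) * (min 1 (γ/2) * U) ^ 2 := by ring
      _ ≤ max 1 (γ - 1) * S ^ 2 := by
          exact mul_le_mul_of_nonneg_left (pow_le_pow_left₀ (by positivity) l2 2) hM1.le
  constructor
  · calc (min 1 (γ - 1) / (max 1 (γ/2))^2) * (a ^ (γ/2) - b ^ (γ/2)) ^ 2
        = a ^ γ * ((min 1 (γ - 1) / (max 1 (γ/2))^2) * S ^ 2) := by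
          rw [e2, mul_pow, ha2]; ring
      _ ≤ a ^ γ * (T * U) := mul_le_mul_of_nonneg_left hcore1 haγ
      _ = (a ^ (γ - 1) - b ^ (γ - 1)) * (a - b) := by rw [e1, e3, ← ha1]; ring
  · calc (a ^ (γ - 1) - b ^ (γ - 1)) * (a - b)
        = a ^ γ * (T * U) := by rw [e1, e3, ← ha1]; ring
      _ ≤ a ^ γ * ((max 1 (γ - 1) / (min 1 (γ/2))^2) * S ^ 2) :=
          mul_le_mul_of_nonneg_left hcore2 haγ
      _ = (max 1 (γ - 1) / (min 1 (γ/2))^2) * (a ^ (γ/2) - b ^ (γ/2)) ^ 2 := by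
          rw [e2, mul_pow, ha2]; ring

/-- Pointwise power equivalence: for `γ > 1` there are constants `0 < c ≤ C` depending
only on `γ` such that for all `a, b ≥ 0`,
`c (a^{γ/2} − b^{γ/2})² ≤ (a^{γ−1} − b^{γ−1})(a − b) ≤ C (a^{γ/2} − b^{γ/2})²`. -/
theorem pointwise_power_equiv (γ : ℝ) (hγ : 1 < γ) :
    ∃ c C : ℝ, 0 < c ∧ c ≤ C ∧
      ∀ a b : ℝ, 0 ≤ a → 0 ≤ b →
        c * (a ^ (γ/2) - b ^ (γ/2)) ^ 2
            ≤ (a ^ (γ - 1) - b ^ (γ - 1)) * (a - b) ∧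
        (a ^ (γ - 1) - b ^ (γ - 1)) * (a - b)
            ≤ C * (a ^ (γ/2) - b ^ (γ/2)) ^ 2 := by
  have hγ1 : (0:ℝ) < γ - 1 := by linarith
  have hγ2 : (0:ℝ) < γ/2 := by linarith
  have hm1 : 0 < min 1 (γ - 1) := lt_min one_pos hγ1
  have hM1 : 0 < max 1 (γ - 1) := lt_of_lt_of_le one_pos (le_max_left _ _)
  have hm2 : 0 < min 1 (γ/2) := lt_min one_pos hγ2
  have hM2 : 0 < max 1 (γ/2) := lt_of_lt_of_le one_pos (le_max_left _ _)
  refine ⟨min 1 (γ - 1) / (max 1 (γ/2))^2, max 1 (γ - 1) / (min 1 (γ/2))^2,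
    by positivity, ?_, ?_⟩
  · apply div_le_div₀ (by positivity) (min_le_max) (by positivity)
    exact pow_le_pow_left₀ hm2.le (min_le_max) 2
  · intro a b ha hb
    rcases le_total b a with h | h
    · exact key_ordered γ hγ a b hb h
    · obtain ⟨l, u⟩ := key_ordered γ hγ b a ha h
      have e1 : (a ^ (γ - 1) - b ^ (γ - 1)) * (a - b)
          = (b ^ (γ - 1) - a ^ (γ - 1)) * (b - a) := by ring
      have e2 : (a ^ (γ/2) - b ^ (γ/2)) ^ 2 = (b ^ (γ/2) - a ^ (γ/2)) ^ 2 := by ring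
      rw [e1, e2]
      exact ⟨l, u⟩
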